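/- For a scalar field Lagrangian L(X,φ) with n = √(2X) L_X, imposing dn = 0 yields the constraint (L_X + 2X L_{XX}) dX = −2X L_{Xφ} dφ, and the resulting ratio (p_X dX + p_φ dφ)/(ρ_X dX + ρ_φ dφ) at fixed n equals (2X L_{Xφ}/L_φ)·c_s² − 1, where c_s² = L_X/(L_X + 2X L_{XX}). -/

import Mathlib

/-- Imposing dn = 0 gives (L_X + 2X L_{XX}) dX = −2X L_{Xφ} dφ, and the ratio
(p_X dX + p_φ dφ)/(ρ_X dX + ρ_φ dφ) at fixed n equals (2X L_{Xφ}/L_φ)c_s² − 1,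
where c_s² = L_X/(L_X + 2X L_{XX}). -/
theorem stmt15 (LX Lφ LXX LXφ X dφ : ℝ) (hX : 0 < X)
    (hLφ : Lφ ≠ 0) (hden : LX + 2 * X * LXX ≠ 0) (hdφ : dφ ≠ 0) :
    let dX : ℝ := -(2 * X * LXφ * dφ) / (LX + 2 * X * LXX)
    let cs2 : ℝ := LX / (LX + 2 * X * LXX)
    (LX + 2 * X * LXX) * dX = -(2 * X * LXφ) * dφ ∧
    (LX * dX + Lφ * dφ) /
      ((LX + 2 * X * LXX) * dX + (2 * X * LXφ - Lφ) * dφ)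
      = (2 * X * LXφ / Lφ) * cs2 - 1 := by
  intro dX cs2
  have h1 : (LX + 2 * X * LXX) * dX = -(2 * X * LXφ) * dφ := by
    simp only [dX]; field_simp
  refine ⟨h1, ?_⟩
  have h2 : (LX + 2 * X * LXX) * dX + (2 * X * LXφ - Lφ) * dφ = -Lφ * dφ := by
    rw [h1]; ring
  rw [h2]
  show (LX * (-(2 * X * LXφ * dφ) / (LX + 2 * X * LXX)) + Lφ * dφ) / (-Lφ * dφ)
      = 2 * X * LXφ / Lφ * (LX / (LX + 2 * X * LXX)) - 1
  field_simp
  ring
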